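/- Let n, d, k be natural numbers with k ≤ n, let v : Fin n → Fin d → ℕ be a family of d-dimensional vectors of natural numbers, let T : Fin d → ℕ, and let Σ j := ∑_{i} v i j denote the componentwise total sum. Assume T j ≤ Σ j for every j. Then there exists a finite set S' ⊆ Fin n with |S'| ≤ k such that T j ≤ ∑_{i ∈ S'} v i j for every j, if and only if there exists a finite set S'' ⊆ Fin n with |S''| ≥ n − k such that ∑_{i ∈ S''} v i j ≤ Σ j − T j for every j (subtraction in ℕ, which here agrees with integer subtraction since T j ≤ Σ j). -/
import Mathlib


/-- Correctness of the reduction from Multidimensional Relaxed Subset Sum (at most `k`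
vectors summing to at least the target `T`) to Multidimensional Uniform 0/1 Knapsack
(at least `n - k` vectors summing to at most the total sum minus `T`). -/
theorem stmt_0 (n d k : ℕ) (hk : k ≤ n) (v : Fin n → Fin d → ℕ) (T : Fin d → ℕ)
    (hT : ∀ j, T j ≤ ∑ i, v i j) :
    (∃ S' : Finset (Fin n), S'.card ≤ k ∧ ∀ j, T j ≤ ∑ i ∈ S', v i j) ↔
      (∃ S'' : Finset (Fin n), n - k ≤ S''.card ∧
        ∀ j, ∑ i ∈ S'', v i j ≤ (∑ i, v i j) - T j) := by
  have key : ∀ (S : Finset (Fin n)) (j : Fin d),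
      ∑ i ∈ Sᶜ, v i j = (∑ i, v i j) - ∑ i ∈ S, v i j := by
    intro S j
    have := Finset.sum_add_sum_compl S (fun i => v i j)
    omega
  constructor
  · rintro ⟨S, hcard, hsum⟩
    refine ⟨Sᶜ, ?_, fun j => ?_⟩
    · rw [Finset.card_compl, Fintype.card_fin]; omega
    · have := key S j
      have := hsum j
      have hle : ∑ i ∈ S, v i j ≤ ∑ i, v i j :=
        Finset.sum_le_sum_of_subset (Finset.subset_univ S)
      omega
  · rintro ⟨S, hcard, hsum⟩
    refine ⟨Sᶜ, ?_, fun j => ?_⟩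
    · rw [Finset.card_compl, Fintype.card_fin]; omega
    · have := key S j
      have := hsum j
      have := hT j
      have hle : ∑ i ∈ S, v i j ≤ ∑ i, v i j :=
        Finset.sum_le_sum_of_subset (Finset.subset_univ S)
      omega
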